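/- For the limit polynomial h(I₁,I₂,I₃) = (3/2)(I₁⁴+I₂⁴)/4! + I₃, there exist no linearly independent vectors u, v ∈ ℝ³ and real numbers α, β satisfying the system: h¹[u] = h¹[v] = 0, h²[v,u] = h²[v,v] = 0, h³[v,v,v] = 0, 2α h²[u,u] + h³[v,v,u] = 0, 6α h³[u,v,v] + h⁴[v,v,v,v] = 0, 6β h²[u,u] + 6α h³[u,u,v] + h⁴[v,v,v,u] = 0 (at the origin). In particular the 5-jet of h at 0 does not belong to Ψ₂(3), so Ψ₂(3) is not closed in the space of 5-jets. -/

import Mathlib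

/-- The limit polynomial `h(I) = (3/2)(I₁⁴+I₂⁴)/4! + I₃`. -/
noncomputable def h : (Fin 3 → ℝ) → ℝ :=
  fun I => (3 / 2) * ((I 0) ^ 4 + (I 1) ^ 4) / 24 + I 2

noncomputable def q : ℝ → ℝ := fun t => 3 / 2 * t ^ 4 / 24

lemma q_contDiff : ContDiff ℝ ⊤ q :=
  ((contDiff_const.mul ((contDiff_id (𝕜 := ℝ) (E := ℝ)).pow 4)).div_const 24)

lemma deriv_q : deriv q = fun t => t ^ 3 / 4 := by
  funext t
  have h : q = fun t : ℝ => (1/16) * t ^ 4 := by funext s; unfold q; ring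
  rw [h, deriv_const_mul _ (by fun_prop)]
  simp; ring

lemma d2 : deriv (fun t : ℝ => t ^ 3 / 4) = fun t : ℝ => 3 * t ^ 2 / 4 := by
  funext t; rw [deriv_div_const]; simp [mul_comm]

lemma d3 : deriv (fun t : ℝ => 3 * t ^ 2 / 4) = fun t : ℝ => 3 * t / 2 := by
  funext t; rw [deriv_div_const, deriv_const_mul _ (by fun_prop)]; simp; ring

lemma d4 : deriv (fun t : ℝ => 3 * t / 2) = fun _ : ℝ => 3 / 2 := by
  funext t; rw [deriv_div_const, deriv_const_mul _ (by fun_prop)]; simp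

lemma iq1 : iteratedDeriv 1 q 0 = 0 := by
  rw [iteratedDeriv_one, deriv_q]; simp

lemma iq3 : iteratedDeriv 3 q 0 = 0 := by
  rw [show (3:ℕ) = 2 + 1 from rfl, iteratedDeriv_succ', deriv_q,
    iteratedDeriv_succ', d2, iteratedDeriv_succ', d3]
  simp

lemma iq4 : iteratedDeriv 4 q 0 = 3 / 2 := by
  rw [show (4:ℕ) = 3 + 1 from rfl, iteratedDeriv_succ', deriv_q,
    iteratedDeriv_succ', d2, iteratedDeriv_succ', d3, iteratedDeriv_succ', d4]
  simp

lemma iid1 : iteratedDeriv 1 (id : ℝ → ℝ) 0 = 1 := by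
  rw [iteratedDeriv_one]; exact deriv_id 0

lemma iid3 : iteratedDeriv 3 (id : ℝ → ℝ) 0 = 0 := by
  rw [show (3:ℕ) = 2 + 1 from rfl, iteratedDeriv_succ',
    show deriv (id : ℝ → ℝ) = fun _ : ℝ => 1 from funext fun t => deriv_id t]
  simp [iteratedDeriv_succ', deriv_const]

lemma iid4 : iteratedDeriv 4 (id : ℝ → ℝ) 0 = 0 := by
  rw [show (4:ℕ) = 3 + 1 from rfl, iteratedDeriv_succ',
    show deriv (id : ℝ → ℝ) = fun _ : ℝ => 1 from funext fun t => deriv_id t]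
  simp [iteratedDeriv_succ', deriv_const]

lemma cd_proj (j : Fin 3) (f : ℝ → ℝ) (hf : ContDiff ℝ ⊤ f) :
    ContDiff ℝ ⊤ (fun x : Fin 3 → ℝ => f (x j)) :=
  hf.comp (ContinuousLinearMap.proj (R := ℝ) (φ := fun _ : Fin 3 => ℝ) j).contDiff

lemma key (n : ℕ) (j : Fin 3) (f : ℝ → ℝ) (hf : ContDiff ℝ ⊤ f) (m : Fin n → (Fin 3 → ℝ)) :
    iteratedFDeriv ℝ n (fun x : Fin 3 → ℝ => f (x j)) 0 m
      = (∏ i, m i j) • iteratedDeriv n f 0 := by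
  have h1 : (fun x : Fin 3 → ℝ => f (x j))
      = f ∘ (ContinuousLinearMap.proj (R := ℝ) (φ := fun _ : Fin 3 => ℝ) j) := rfl
  rw [h1, ContinuousLinearMap.iteratedFDeriv_comp_right _ hf 0 le_top]
  simp [ContinuousMultilinearMap.compContinuousLinearMap_apply,
    iteratedFDeriv_apply_eq_iteratedDeriv_mul_prod]

lemma hsplit : h = fun x : Fin 3 → ℝ => q (x 0) + (q (x 1) + id (x 2)) := by
  funext x
  simp only [h, q, id]
  ring

lemma ihd (n : ℕ) (m : Fin n → (Fin 3 → ℝ)) :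
    iteratedFDeriv ℝ n h 0 m
      = (∏ i, m i 0) • iteratedDeriv n q 0 + (∏ i, m i 1) • iteratedDeriv n q 0
        + (∏ i, m i 2) • iteratedDeriv n (id : ℝ → ℝ) 0 := by
  rw [hsplit,
    iteratedFDeriv_add_apply' (f := fun x : Fin 3 → ℝ => q (x 0))
      (g := fun x : Fin 3 → ℝ => q (x 1) + id (x 2))
      ((cd_proj 0 q q_contDiff).of_le le_top).contDiffAt
      (((cd_proj 1 q q_contDiff).add (cd_proj 2 id contDiff_id)).of_le le_top).contDiffAt,
    iteratedFDeriv_add_apply' (f := fun x : Fin 3 → ℝ => q (x 1))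
      (g := fun x : Fin 3 → ℝ => id (x 2))
      ((cd_proj 1 q q_contDiff).of_le le_top).contDiffAt
      ((cd_proj 2 id contDiff_id).of_le le_top).contDiffAt]
  simp only [ContinuousMultilinearMap.add_apply, key n 0 q q_contDiff,
    key n 1 q q_contDiff, key n 2 id contDiff_id]
  ring

/-- No linearly independent `u, v` and reals `α, β` solve the system defining `Ψ₂(3)`
for `h` at the origin: the 5-jet of `h` at `0` does not belong to `Ψ₂(3)`. -/
theorem limit_jet_not_mem_Psi2 :
    ¬ ∃ (u v : Fin 3 → ℝ) (α β : ℝ),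
      LinearIndependent ℝ ![u, v] ∧
      fderiv ℝ h 0 u = 0 ∧
      fderiv ℝ h 0 v = 0 ∧
      iteratedFDeriv ℝ 2 h 0 ![v, u] = 0 ∧
      iteratedFDeriv ℝ 2 h 0 ![v, v] = 0 ∧
      iteratedFDeriv ℝ 3 h 0 ![v, v, v] = 0 ∧
      2 * α * iteratedFDeriv ℝ 2 h 0 ![u, u] + iteratedFDeriv ℝ 3 h 0 ![v, v, u] = 0 ∧
      6 * α * iteratedFDeriv ℝ 3 h 0 ![u, v, v] + iteratedFDeriv ℝ 4 h 0 ![v, v, v, v] = 0 ∧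
      6 * β * iteratedFDeriv ℝ 2 h 0 ![u, u] + 6 * α * iteratedFDeriv ℝ 3 h 0 ![u, u, v]
        + iteratedFDeriv ℝ 4 h 0 ![v, v, v, u] = 0 := by
  rintro ⟨u, v, α, β, hli, -, h1v, -, -, -, -, heq, -⟩
  -- v 2 = 0 from the first derivative
  have hv2 : v 2 = 0 := by
    have := iteratedFDeriv_one_apply (𝕜 := ℝ) (f := h) (x := 0) ![v]
    have h1 : fderiv ℝ h 0 v = iteratedFDeriv ℝ 1 h 0 ![v] := by
      rw [this]; simp
    rw [h1, ihd 1 ![v]] at h1v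
    simpa [iq1, iid1, Fin.prod_univ_one] using h1v
  -- third derivative term vanishes, fourth is (3/2)(v₀⁴+v₁⁴)
  have h3 : iteratedFDeriv ℝ 3 h 0 ![u, v, v] = 0 := by
    rw [ihd 3]; simp [iq3, iid3]
  have h4 : iteratedFDeriv ℝ 4 h 0 ![v, v, v, v] = 3 / 2 * ((v 0) ^ 4 + (v 1) ^ 4) := by
    rw [ihd 4]; simp [iq4, iid4, Fin.prod_univ_four]; ring
  rw [h3, h4] at heq
  have hsum : (v 0) ^ 4 + (v 1) ^ 4 = 0 := by linarith
  have hv0 : v 0 = 0 := by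
    have h0 : (v 0) ^ 4 = 0 := le_antisymm (by nlinarith [sq_nonneg ((v 1) ^ 2)]) (by positivity)
    exact pow_eq_zero_iff (by norm_num) |>.mp h0
  have hv1 : v 1 = 0 := by
    have h0 : (v 1) ^ 4 = 0 := le_antisymm (by nlinarith [sq_nonneg ((v 0) ^ 2)]) (by positivity)
    exact pow_eq_zero_iff (by norm_num) |>.mp h0
  have hvz : v = 0 := by
    funext i
    fin_cases i <;> simpa using by assumption
  have := hli.ne_zero 1
  simp [hvz] at this
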